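/- Let n ≥ 3 be an integer, ℓ > 0, β ∈ ℝ, m ∈ ℝ, and let r : (a,b) → (0,∞) be a differentiable function satisfying f(r(x)) > 0 and r'(x) = r(x)·√(f(r(x))) for all x, where f(ρ) = β − 2m/ρ^{n−2} − ρ²/ℓ². Then φ(x) := r(x)^{(n−2)/2} is twice differentiable and satisfies the Yamabe equation φ'' = ((n−2)²β/4)·φ − (n(n−2)/(4ℓ²))·φ^{(n+2)/(n−2)} on (a,b). -/

import Mathlib

/-- Time-symmetric Birmingham slices solve the spherically-symmetric Yamabe
equation: if `r : (a,b) → (0,∞)` satisfies `f(r) > 0` and `r' = r·√(f(r))`, where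
`f(ρ) = β − 2m/ρ^(n−2) − ρ²/ℓ²`, then `φ = r^((n−2)/2)` is twice differentiable
and satisfies `φ'' = ((n−2)²β/4)·φ − (n(n−2)/(4ℓ²))·φ^((n+2)/(n−2))` on `(a,b)`. -/
theorem birmingham_solves_yamabe (n : ℕ) (hn : 3 ≤ n) (ℓ β m a b : ℝ) (hℓ : 0 < ℓ)
    (r : ℝ → ℝ)
    (hpos : ∀ x ∈ Set.Ioo a b, 0 < r x)
    (hf : ∀ x ∈ Set.Ioo a b, 0 < β - 2 * m / (r x) ^ (n - 2) - (r x) ^ 2 / ℓ ^ 2)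
    (hder : ∀ x ∈ Set.Ioo a b,
      HasDerivAt r (r x * Real.sqrt (β - 2 * m / (r x) ^ (n - 2) - (r x) ^ 2 / ℓ ^ 2)) x) :
    ∀ x ∈ Set.Ioo a b,
      HasDerivAt (deriv (fun x => (r x) ^ (((n : ℝ) - 2) / 2)))
        ((((n : ℝ) - 2) ^ 2 * β / 4) * (r x) ^ (((n : ℝ) - 2) / 2)
          - ((n : ℝ) * ((n : ℝ) - 2) / (4 * ℓ ^ 2))
            * ((r x) ^ (((n : ℝ) - 2) / 2)) ^ (((n : ℝ) + 2) / ((n : ℝ) - 2))) x := by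
  obtain ⟨k, rfl⟩ : ∃ k, n = k + 3 := ⟨n - 3, by omega⟩
  intro x hx
  set p : ℝ := (((k + 3 : ℕ) : ℝ) - 2) / 2 with hp
  have hpval : p = ((k : ℝ) + 1) / 2 := by rw [hp]; push_cast; ring
  set F : ℝ → ℝ := fun y => β - 2 * m / (r y) ^ (k + 1) - (r y) ^ 2 / ℓ ^ 2 with hF
  have hFf : ∀ y ∈ Set.Ioo a b, 0 < F y := hf
  have hderF : ∀ y ∈ Set.Ioo a b, HasDerivAt r (r y * Real.sqrt (F y)) y := hder
  -- first derivative of φ on the interval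
  have hφd : ∀ y ∈ Set.Ioo a b,
      HasDerivAt (fun z => r z ^ p) (p * (Real.sqrt (F y) * r y ^ p)) y := by
    intro y hy
    have hry := hpos y hy
    have h := (hderF y hy).rpow_const (p := p) (Or.inl hry.ne')
    convert h using 1
    rw [Real.rpow_sub_one hry.ne']
    field_simp
  have hmem : Set.Ioo a b ∈ nhds x := isOpen_Ioo.mem_nhds hx
  have heq : deriv (fun z => r z ^ p) =ᶠ[nhds x]
      fun y => p * (Real.sqrt (F y) * r y ^ p) := by
    filter_upwards [hmem] with y hy using (hφd y hy).deriv
  -- second derivative pieces at x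
  have hrx := hpos x hx
  have hFx := hFf x hx
  have hdx := hderF x hx
  have h1 : HasDerivAt (fun y => (r y) ^ (k + 1))
      ((k + 1 : ℕ) * r x ^ k * (r x * Real.sqrt (F x))) x := hdx.pow (k + 1)
  have h2 := (hasDerivAt_const x (2 * m)).div h1 (pow_ne_zero _ hrx.ne')
  have h3 := (hdx.pow 2).div_const (ℓ ^ 2)
  have hFd := ((hasDerivAt_const x β).sub h2).sub h3
  have hsd := hFd.sqrt hFx.ne'
  have hg := (hsd.mul (hφd x hx)).const_mul p
  refine (HasDerivAt.congr_of_eventuallyEq ?_ heq)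
  convert hg using 1
  case e'_4 => rfl
  case e'_8 => rfl
  -- algebra
  set s := Real.sqrt (F x) with hsdef
  have hs0 : s ≠ 0 := (Real.sqrt_pos.mpr hFx).ne'
  have hs2 : s * s = F x := Real.mul_self_sqrt hFx.le
  have hrpow : (r x ^ p) ^ ((((k + 3 : ℕ) : ℝ) + 2) / (((k + 3 : ℕ) : ℝ) - 2))
      = r x ^ p * r x ^ 2 := by
    rw [← Real.rpow_natCast (r x) 2, ← Real.rpow_mul hrx.le, ← Real.rpow_add hrx]
    congr 1
    rw [hpval]
    push_cast
    have h1 : (k : ℝ) + 1 ≠ 0 := by positivity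
    rw [show (k : ℝ) + 3 - 2 = (k : ℝ) + 1 from by ring]
    field_simp
    ring
  rw [hrpow]
  have hF' : F x = β - 2 * m / (r x) ^ (k + 1) - (r x) ^ 2 / ℓ ^ 2 := rfl
  change _ = p * (_ / (2 * s) * r x ^ p + s * (p * (s * r x ^ p)))
  rw [show s * (p * (s * r x ^ p)) = p * (s * s) * r x ^ p from by ring, hs2, hF']
  rw [hpval]
  -- remaining: pure field identity (with s still in one place? check)
  push_cast
  field_simp
  ring
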